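/- arXiv:2310.20258 — 2 statements merged into one kernel-verified Lean document; each statement's English description precedes it below -/
import Mathlib

section
/- Let (Ω, μ) be a probability space, Z a metric space, Y a metric space, and f : Z → Y an L-Lipschitz function with Lipschitz constant L > 0. Let Z₁, Z₂ : Ω → Z be independent and identically distributed random variables, and define the real-valued random variables D_Z(ω) = dist(Z₁(ω), Z₂(ω)) and D_Y(ω) = dist(f(Z₁(ω)), f(Z₂(ω))). Assume D_Z and D_Y are square-integrable with positive variances Var(D_Z) > 0 and Var(D_Y) > 0. Then the Pearson correlation coefficient of D_Z and D_Y satisfies Corr(D_Z, D_Y) ≥ ((1/L)·(Var(D_Y) + (E[D_Y])²) − L·(E[D_Z])²) / √(Var(D_Z)·Var(D_Y)). -/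
open MeasureTheory ProbabilityTheory

/-- Theorem 1 (CoBO): Let `Z₁, Z₂` be i.i.d. random variables valued in a metric space `Z`,
`f : Z → Y` an `L`-Lipschitz map into a metric space `Y` with `L > 0`, and set
`D_Z(ω) = dist(Z₁ ω, Z₂ ω)`, `D_Y(ω) = dist(f (Z₁ ω), f (Z₂ ω))`. If `D_Z, D_Y` are
square-integrable with positive variances, then the Pearson correlation
`Corr(D_Z, D_Y) = (E[D_Z D_Y] − E[D_Z]E[D_Y]) / √(Var(D_Z)·Var(D_Y))` satisfies
`Corr(D_Z, D_Y) ≥ ((1/L)·(Var(D_Y) + (E[D_Y])²) − L·(E[D_Z])²) / √(Var(D_Z)·Var(D_Y))`,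
where `Var(X) = E[X²] − (E[X])²`. -/
theorem correlation_dist_ge_of_lipschitz
    {Ω : Type*} [MeasurableSpace Ω] (μ : Measure Ω) [IsProbabilityMeasure μ]
    {Z Y : Type*} [MetricSpace Z] [MetricSpace Y]
    [MeasurableSpace Z] [BorelSpace Z]
    (f : Z → Y) (L : ℝ) (hL : 0 < L)
    (hf : ∀ z₁ z₂ : Z, dist (f z₁) (f z₂) ≤ L * dist z₁ z₂)
    (Z₁ Z₂ : Ω → Z) (hZ₁ : Measurable Z₁) (hZ₂ : Measurable Z₂)
    (hindep : IndepFun Z₁ Z₂ μ)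
    (hident : IdentDistrib Z₁ Z₂ μ μ)
    (DZ DY : Ω → ℝ)
    (hDZ : DZ = fun ω => dist (Z₁ ω) (Z₂ ω))
    (hDY : DY = fun ω => dist (f (Z₁ ω)) (f (Z₂ ω)))
    (hDZ2 : MemLp DZ 2 μ) (hDY2 : MemLp DY 2 μ)
    (hVarZ : 0 < ∫ ω, DZ ω ^ 2 ∂μ - (∫ ω, DZ ω ∂μ) ^ 2)
    (hVarY : 0 < ∫ ω, DY ω ^ 2 ∂μ - (∫ ω, DY ω ∂μ) ^ 2) :
    (∫ ω, DZ ω * DY ω ∂μ - (∫ ω, DZ ω ∂μ) * ∫ ω, DY ω ∂μ) /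
        Real.sqrt ((∫ ω, DZ ω ^ 2 ∂μ - (∫ ω, DZ ω ∂μ) ^ 2) *
          (∫ ω, DY ω ^ 2 ∂μ - (∫ ω, DY ω ∂μ) ^ 2)) ≥
      ((1 / L) * ((∫ ω, DY ω ^ 2 ∂μ - (∫ ω, DY ω ∂μ) ^ 2) + (∫ ω, DY ω ∂μ) ^ 2) -
          L * (∫ ω, DZ ω ∂μ) ^ 2) /
        Real.sqrt ((∫ ω, DZ ω ^ 2 ∂μ - (∫ ω, DZ ω ∂μ) ^ 2) *
          (∫ ω, DY ω ^ 2 ∂μ - (∫ ω, DY ω ∂μ) ^ 2)) := by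

  have hpt : ∀ ω, DY ω ≤ L * DZ ω := by
    intro ω; rw [hDZ, hDY]; exact hf _ _
  have hDZnn : ∀ ω, 0 ≤ DZ ω := by intro ω; rw [hDZ]; exact dist_nonneg
  have hDYnn : ∀ ω, 0 ≤ DY ω := by intro ω; rw [hDY]; exact dist_nonneg
  have intDZ : Integrable DZ μ := hDZ2.integrable (by norm_num)
  have intDY : Integrable DY μ := hDY2.integrable (by norm_num)
  have intDY2 : Integrable (fun ω => DY ω ^ 2) μ := hDY2.integrable_sq
  have intProd : Integrable (fun ω => DZ ω * DY ω) μ := by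
    have : MemLp (DZ • DY) 1 μ := hDY2.smul hDZ2
    simpa [Pi.smul_apply, smul_eq_mul, memLp_one_iff_integrable, Pi.mul_def] using this
  have hsqrt : 0 < Real.sqrt ((∫ ω, DZ ω ^ 2 ∂μ - (∫ ω, DZ ω ∂μ) ^ 2) *
      (∫ ω, DY ω ^ 2 ∂μ - (∫ ω, DY ω ∂μ) ^ 2)) :=
    Real.sqrt_pos.2 (mul_pos hVarZ hVarY)
  rw [ge_iff_le, div_le_div_iff_of_pos_right hsqrt]
  have hA : (1 / L) * ∫ ω, DY ω ^ 2 ∂μ ≤ ∫ ω, DZ ω * DY ω ∂μ := by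
    rw [← integral_const_mul]
    apply integral_mono (intDY2.const_mul _) intProd
    intro ω
    have h1 : DY ω / L ≤ DZ ω := (div_le_iff₀' hL).2 (hpt ω)
    calc 1 / L * DY ω ^ 2 = (DY ω / L) * DY ω := by ring
      _ ≤ DZ ω * DY ω := mul_le_mul_of_nonneg_right h1 (hDYnn ω)
  have hEZnn : 0 ≤ ∫ ω, DZ ω ∂μ := integral_nonneg hDZnn
  have hB : ∫ ω, DY ω ∂μ ≤ L * ∫ ω, DZ ω ∂μ := by
    rw [← integral_const_mul]
    exact integral_mono intDY (intDZ.const_mul _) hpt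
  have hC : (∫ ω, DZ ω ∂μ) * ∫ ω, DY ω ∂μ ≤ L * (∫ ω, DZ ω ∂μ) ^ 2 := by
    calc (∫ ω, DZ ω ∂μ) * ∫ ω, DY ω ∂μ ≤ (∫ ω, DZ ω ∂μ) * (L * ∫ ω, DZ ω ∂μ) :=
          mul_le_mul_of_nonneg_left hB hEZnn
      _ = L * (∫ ω, DZ ω ∂μ) ^ 2 := by ring
  have : (1 / L) * ((∫ ω, DY ω ^ 2 ∂μ - (∫ ω, DY ω ∂μ) ^ 2) + (∫ ω, DY ω ∂μ) ^ 2)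
      = (1 / L) * ∫ ω, DY ω ^ 2 ∂μ := by ring
  rw [this]
  linarith
end

section
/- Let X and Y be square-integrable real-valued random variables on a probability space with X ≥ 0 almost surely, Y ≥ 0 almost surely, and Y ≤ L·X almost surely for a constant L > 0. Assume Var(X) > 0 and Var(Y) > 0. Then the Pearson correlation coefficient satisfies Corr(X, Y) ≥ ((1/L)·(Var(Y) + (E[Y])²) − L·(E[X])²) / √(Var(X)·Var(Y)). -/
open MeasureTheory

/-- Abstract form of Theorem 1 (CoBO): for square-integrable `X, Y ≥ 0` a.s. with
`Y ≤ L·X` a.s., `L > 0`, and positive variances, the Pearson correlation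
`Corr(X,Y) = (E[XY] − E[X]E[Y]) / √(Var(X)·Var(Y))` is bounded below by
`((1/L)·(Var(Y) + (E[Y])²) − L·(E[X])²) / √(Var(X)·Var(Y))`,
where `Var(X) = E[X²] − (E[X])²`. -/
theorem correlation_ge_of_le_smul
    {Ω : Type*} [MeasurableSpace Ω] (μ : Measure Ω) [IsProbabilityMeasure μ]
    (X Y : Ω → ℝ) (L : ℝ) (hL : 0 < L)
    (hX0 : ∀ᵐ ω ∂μ, 0 ≤ X ω)
    (hY0 : ∀ᵐ ω ∂μ, 0 ≤ Y ω)
    (hYX : ∀ᵐ ω ∂μ, Y ω ≤ L * X ω)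
    (hX2 : MemLp X 2 μ) (hY2 : MemLp Y 2 μ)
    (hVarX : 0 < ∫ ω, X ω ^ 2 ∂μ - (∫ ω, X ω ∂μ) ^ 2)
    (hVarY : 0 < ∫ ω, Y ω ^ 2 ∂μ - (∫ ω, Y ω ∂μ) ^ 2) :
    (∫ ω, X ω * Y ω ∂μ - (∫ ω, X ω ∂μ) * ∫ ω, Y ω ∂μ) /
        Real.sqrt ((∫ ω, X ω ^ 2 ∂μ - (∫ ω, X ω ∂μ) ^ 2) *
          (∫ ω, Y ω ^ 2 ∂μ - (∫ ω, Y ω ∂μ) ^ 2)) ≥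
      ((1 / L) * ((∫ ω, Y ω ^ 2 ∂μ - (∫ ω, Y ω ∂μ) ^ 2) + (∫ ω, Y ω ∂μ) ^ 2) -
          L * (∫ ω, X ω ∂μ) ^ 2) /
        Real.sqrt ((∫ ω, X ω ^ 2 ∂μ - (∫ ω, X ω ∂μ) ^ 2) *
          (∫ ω, Y ω ^ 2 ∂μ - (∫ ω, Y ω ∂μ) ^ 2)) := by

  have hXi : Integrable X μ := hX2.integrable (by norm_num)
  have hYi : Integrable Y μ := hY2.integrable (by norm_num)
  have hmul : ∀ {f g : Ω → ℝ}, MemLp f 2 μ → MemLp g 2 μ → Integrable (fun ω => f ω * g ω) μ := by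
    intro f g hf hg
    have := (hg.smul (q := 2) (p := 2) (r := 1) hf).integrable le_rfl
    exact this
  have hXYi : Integrable (fun ω => X ω * Y ω) μ := hmul hX2 hY2
  have hY2i : Integrable (fun ω => Y ω ^ 2) μ := by
    simpa [pow_two] using hmul hY2 hY2
  have hEX : 0 ≤ ∫ ω, X ω ∂μ := integral_nonneg_of_ae hX0
  have hEY_le : ∫ ω, Y ω ∂μ ≤ L * ∫ ω, X ω ∂μ := by
    rw [← integral_const_mul]
    exact integral_mono_ae hYi (hXi.const_mul L) hYX
  have hsq : ∫ ω, Y ω ^ 2 ∂μ ≤ L * ∫ ω, X ω * Y ω ∂μ := by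
    rw [← integral_const_mul]
    refine integral_mono_ae hY2i (hXYi.const_mul L) ?_
    filter_upwards [hY0, hYX] with ω h0 h1
    calc Y ω ^ 2 = Y ω * Y ω := sq (Y ω)
    _ ≤ (L * X ω) * Y ω := mul_le_mul_of_nonneg_right h1 h0
    _ = L * (X ω * Y ω) := by ring
  have hnum : ((1 / L) * ((∫ ω, Y ω ^ 2 ∂μ - (∫ ω, Y ω ∂μ) ^ 2) + (∫ ω, Y ω ∂μ) ^ 2) -
      L * (∫ ω, X ω ∂μ) ^ 2) ≤ ∫ ω, X ω * Y ω ∂μ - (∫ ω, X ω ∂μ) * ∫ ω, Y ω ∂μ := by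
    have h1 : (1 / L) * (∫ ω, Y ω ^ 2 ∂μ) ≤ ∫ ω, X ω * Y ω ∂μ := by
      rw [div_mul_eq_mul_div, one_mul, div_le_iff₀' hL]
      exact hsq
    have h2 : (∫ ω, X ω ∂μ) * ∫ ω, Y ω ∂μ ≤ L * (∫ ω, X ω ∂μ) ^ 2 := by
      calc (∫ ω, X ω ∂μ) * ∫ ω, Y ω ∂μ ≤ (∫ ω, X ω ∂μ) * (L * ∫ ω, X ω ∂μ) :=
        mul_le_mul_of_nonneg_left hEY_le hEX
      _ = L * (∫ ω, X ω ∂μ) ^ 2 := by ring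
    have : (1 / L) * ((∫ ω, Y ω ^ 2 ∂μ - (∫ ω, Y ω ∂μ) ^ 2) + (∫ ω, Y ω ∂μ) ^ 2)
        = (1 / L) * (∫ ω, Y ω ^ 2 ∂μ) := by ring
    rw [this]
    linarith
  have hden : 0 < Real.sqrt ((∫ ω, X ω ^ 2 ∂μ - (∫ ω, X ω ∂μ) ^ 2) *
      (∫ ω, Y ω ^ 2 ∂μ - (∫ ω, Y ω ∂μ) ^ 2)) :=
    Real.sqrt_pos.mpr (mul_pos hVarX hVarY)
  exact div_le_div_of_nonneg_right hnum hden.le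
end
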